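/- Let $(E,\mathcal{F})$ be a matroid on a finite ground set $E$ whose bases all have size $M$, let $k \ge 1$, and let $f : (k+1)^E \to \mathbb{R}$ be a monotone $k$-submodular function. Let $\mathbf{s}^{(0)} = \mathbf{0}, \mathbf{s}^{(1)}, \dots, \mathbf{s}^{(M)}$ be any sequence in $(k+1)^E$ such that for each $j \in \{1,\dots,M\}$ there exist $e^{(j)} \notin \mathrm{supp}(\mathbf{s}^{(j-1)})$ with $\mathrm{supp}(\mathbf{s}^{(j-1)}) \cup \{e^{(j)}\} \in \mathcal{F}$ and $i^{(j)} \in \{1,\dots,k\}$ with $\mathbf{s}^{(j)}$ equal to $\mathbf{s}^{(j-1)}$ except that $\mathbf{s}^{(j)}(e^{(j)}) = i^{(j)}$. Let $\mathbf{o} \in (k+1)^E$ be any vector with $\mathrm{supp}(\mathbf{o})$ a basis of the matroid. Then there exists a sequence $\mathbf{o}^{(0)} = \mathbf{o}, \mathbf{o}^{(1)}, \dots, \mathbf{o}^{(M)} = \mathbf{s}^{(M)}$ in $(k+1)^E$ such that $\mathbf{s}^{(j)} \prec \mathbf{o}^{(j)}$ for $j = 0, 1, \dots, M-1$, $\mathrm{supp}(\mathbf{o}^{(j)})$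 is a basis of the matroid for every $j = 0, 1, \dots, M$, and for each $j \in \{1,\dots,M\}$ there exists $o^{(j)} \in \mathrm{supp}(\mathbf{o}^{(j-1)}) \setminus \mathrm{supp}(\mathbf{s}^{(j-1)})$ such that $\mathbf{o}^{(j)}$ is obtained from $\mathbf{o}^{(j-1)}$ by setting the coordinate $o^{(j)}$ to $0$ and then setting the coordinate $e^{(j)}$ to $i^{(j)}$. -/

import Mathlib

open Finset

section KSubmodularDefs

variable {E : Type*} [Fintype E] [DecidableEq E] {k : ℕ}

/-- The support of a vector `x ∈ (k+1)^E`, i.e. the set of coordinates with nonzero value. -/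
def supp (x : E → Fin (k + 1)) : Finset E :=
  Finset.univ.filter (fun e => x e ≠ 0)

/-- The partial order `x ⪯ y`, i.e. `X i ⊆ Y i` for every `i ∈ {1, …, k}`. -/
def kLe (x y : E → Fin (k + 1)) : Prop :=
  ∀ e, x e ≠ 0 → y e = x e

/-- The strict partial order `x ≺ y`. -/
def kLt (x y : E → Fin (k + 1)) : Prop :=
  kLe x y ∧ x ≠ y

/-- The meet `x ⊓ y`, whose `i`-th component is `X i ∩ Y i`. -/
def kInf (x y : E → Fin (k + 1)) : E → Fin (k + 1) :=
  fun e => if x e = y e then x e else 0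

/-- The join `x ⊔ y`, whose `i`-th component is `(X i ∪ Y i) \ ⋃_{j ≠ i} (X j ∪ Y j)`. -/
def kSup (x y : E → Fin (k + 1)) : E → Fin (k + 1) :=
  fun e =>
    if x e = 0 then y e
    else if y e = 0 then x e
    else if x e = y e then x e else 0

/-- `f : (k+1)^E → ℝ` is `k`-submodular. -/
def KSubmodular (f : (E → Fin (k + 1)) → ℝ) : Prop :=
  ∀ x y, f x + f y ≥ f (kSup x y) + f (kInf x y)

/-- `f : (k+1)^E → ℝ` is monotone w.r.t. the partial order `⪯`. -/
def KMonotone (f : (E → Fin (k + 1)) → ℝ) : Prop :=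
  ∀ x y, kLe x y → f x ≤ f y

/-- The marginal gain `Δ_{e,i} f(x) = f(x with coordinate e set to i) - f(x)`. -/
def marg (f : (E → Fin (k + 1)) → ℝ) (e : E) (i : Fin (k + 1))
    (x : E → Fin (k + 1)) : ℝ :=
  f (Function.update x e i) - f x

/-- Matroid axioms (M1)–(M3) for a family `F` of subsets of `E`. -/
structure IsMatroid (F : Finset E → Prop) : Prop where
  empty : F ∅
  subset : ∀ ⦃A B : Finset E⦄, A ⊆ B → F B → F A
  exchange : ∀ ⦃A B : Finset E⦄, F A → F B → A.card < B.card →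
    ∃ e ∈ B \ A, F (insert e A)

/-- A basis of the matroid: a maximal independent set. -/
def IsBasis (F : Finset E → Prop) (B : Finset E) : Prop :=
  F B ∧ ∀ B', F B' → B ⊆ B' → B' = B

end KSubmodularDefs

set_option linter.unusedSectionVars false
set_option linter.unusedVariables false

section Aux

variable {E : Type*} [Fintype E] [DecidableEq E] {k : ℕ}

lemma mem_supp_iff {x : E → Fin (k + 1)} {a : E} : a ∈ supp x ↔ x a ≠ 0 := by
  simp [supp]

lemma supp_update_of_ne_zero {x : E → Fin (k + 1)} {a : E} {v : Fin (k + 1)} (hv : v ≠ 0) :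
    supp (Function.update x a v) = insert a (supp x) := by
  ext b
  rcases eq_or_ne b a with rfl | hb
  · simp [mem_supp_iff, hv]
  · simp [mem_supp_iff, Function.update_of_ne hb, hb]

lemma supp_update_zero {x : E → Fin (k + 1)} {a : E} :
    supp (Function.update x a (0 : Fin (k + 1))) = (supp x).erase a := by
  ext b
  rcases eq_or_ne b a with rfl | hb
  · simp [mem_supp_iff]
  · simp [mem_supp_iff, Function.update_of_ne hb, hb]

lemma indep_card_le {F : Finset E → Prop} (hF : IsMatroid F) {M : ℕ}
    (hM : ∀ B : Finset E, IsBasis F B → B.card = M) {A : Finset E} (hA : F A) :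
    A.card ≤ M := by
  obtain ⟨B, ⟨hBF, hAB⟩, hmax⟩ :=
    Set.Finite.exists_maximalFor Finset.card {B : Finset E | F B ∧ A ⊆ B}
      (Set.toFinite _) ⟨A, hA, Finset.Subset.refl A⟩
  have hbasis : IsBasis F B := by
    refine ⟨hBF, fun B' hB' hBB' => ?_⟩
    have : B.card = B'.card :=
      le_antisymm (Finset.card_le_card hBB')
        (hmax ⟨hB', hAB.trans hBB'⟩ (Finset.card_le_card hBB'))
    exact (Finset.eq_of_subset_of_card_le hBB' this.ge).symm
  calc A.card ≤ B.card := Finset.card_le_card hAB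
    _ = M := hM B hbasis

lemma basis_of_card {F : Finset E → Prop} (hF : IsMatroid F) {M : ℕ}
    (hM : ∀ B : Finset E, IsBasis F B → B.card = M) {A : Finset E} (hA : F A)
    (hcard : A.card = M) : IsBasis F A := by
  refine ⟨hA, fun B' hB' hAB' => ?_⟩
  exact (Finset.eq_of_subset_of_card_le hAB'
    (by rw [hcard]; exact indep_card_le hF hM hB')).symm

lemma extend_indep {F : Finset E → Prop} (hF : IsMatroid F) :
    ∀ (d : ℕ) (A B : Finset E), F A → F B → B.card = A.card + d →
      ∃ B', F B' ∧ A ⊆ B' ∧ B' ⊆ A ∪ B ∧ B'.card = B.card := by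
  intro d
  induction d with
  | zero =>
    intro A B hA hB hcard
    exact ⟨A, hA, Finset.Subset.refl A, Finset.subset_union_left, hcard.symm⟩
  | succ d ih =>
    intro A B hA hB hcard
    obtain ⟨x, hx, hAx⟩ := hF.exchange hA hB (by omega)
    rw [Finset.mem_sdiff] at hx
    obtain ⟨B', h1, h2, h3, h4⟩ := ih (insert x A) B hAx hB
      (by rw [Finset.card_insert_of_notMem hx.2]; omega)
    refine ⟨B', h1, (Finset.subset_insert x A).trans h2, h3.trans ?_, h4⟩
    intro y hy
    rcases Finset.mem_union.mp hy with hy | hy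
    · rcases Finset.mem_insert.mp hy with rfl | hy
      · exact Finset.mem_union_right _ hx.1
      · exact Finset.mem_union_left _ hy
    · exact Finset.mem_union_right _ hy

end Aux


/-- Construction of the interpolating sequence `o⁽⁰⁾ = o, o⁽¹⁾, …, o⁽ᴹ⁾ = s⁽ᴹ⁾`
satisfying properties (1) and (2). -/
theorem exists_interpolating_sequence
    {E : Type*} [Fintype E] [DecidableEq E]
    (F : Finset E → Prop) (hF : IsMatroid F) (M : ℕ)
    (hM : ∀ B : Finset E, IsBasis F B → B.card = M)
    (k : ℕ) (hk : 1 ≤ k)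
    (f : (E → Fin (k + 1)) → ℝ)
    (hsub : KSubmodular f) (hmono : KMonotone f)
    (s : ℕ → E → Fin (k + 1)) (e : ℕ → E) (i : ℕ → Fin (k + 1))
    (hs0 : s 0 = fun _ => 0)
    (hstep : ∀ j < M,
      e (j + 1) ∉ supp (s j) ∧
      F (insert (e (j + 1)) (supp (s j))) ∧
      i (j + 1) ≠ 0 ∧
      s (j + 1) = Function.update (s j) (e (j + 1)) (i (j + 1)))
    (o : E → Fin (k + 1)) (ho : IsBasis F (supp o)) :
    ∃ os : ℕ → E → Fin (k + 1),
      os 0 = o ∧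
      os M = s M ∧
      (∀ j < M, kLt (s j) (os j)) ∧
      (∀ j ≤ M, IsBasis F (supp (os j))) ∧
      (∀ j < M, ∃ oj ∈ supp (os j) \ supp (s j),
        os (j + 1) =
          Function.update (Function.update (os j) oj 0) (e (j + 1)) (i (j + 1))) := by
  -- cardinality of supports along the greedy sequence
  have hcard_s : ∀ j ≤ M, (supp (s j)).card = j := by
    intro j
    induction j with
    | zero =>
      intro _
      have : supp (s 0) = (∅ : Finset E) := by
        ext a; simp [hs0, mem_supp_iff]
      simp [this]
    | succ j ih =>
      intro hj
      obtain ⟨h1, h2, h3, h4⟩ := hstep j (by omega)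
      rw [h4, supp_update_of_ne_zero h3, Finset.card_insert_of_notMem h1,
        ih (by omega)]
  -- the key inductive construction
  have key : ∀ n, n ≤ M → ∃ os : ℕ → E → Fin (k + 1),
      os 0 = o ∧
      (∀ j ≤ n, kLe (s j) (os j)) ∧
      (∀ j ≤ n, IsBasis F (supp (os j))) ∧
      (∀ j < n, ∃ oj ∈ supp (os j) \ supp (s j),
        os (j + 1) =
          Function.update (Function.update (os j) oj 0) (e (j + 1)) (i (j + 1))) := by
    intro n
    induction n with
    | zero =>
      intro _
      refine ⟨fun _ => o, rfl, ?_, ?_, ?_⟩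
      · intro j hj
        interval_cases j
        intro a ha
        rw [hs0] at ha
        exact absurd rfl ha
      · intro j hj
        interval_cases j
        exact ho
      · intro j hj; omega
    | succ n ih =>
      intro hn
      obtain ⟨os, hos0, hosle, hosbasis, hosstep⟩ := ih (by omega)
      obtain ⟨he_new, hAF, hi_ne, hs_succ⟩ := hstep n (by omega)
      set B := supp (os n) with hB
      have hBbasis : IsBasis F (supp (os n)) := hosbasis n le_rfl
      have hBcard : B.card = M := hM _ hBbasis
      have hsnle : kLe (s n) (os n) := hosle n le_rfl
      have hsupp_sub : supp (s n) ⊆ B := by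
        intro a ha
        rw [mem_supp_iff] at ha ⊢
        rw [hsnle a ha]; exact ha
      have hcsn : (supp (s n)).card = n := hcard_s n (by omega)
      -- find the element oj to remove
      have claim : ∃ oj ∈ B \ supp (s n),
          IsBasis F (insert (e (n + 1)) (B.erase oj)) := by
        by_cases hcase : e (n + 1) ∈ B
        · refine ⟨e (n + 1), Finset.mem_sdiff.mpr ⟨hcase, he_new⟩, ?_⟩
          rw [Finset.insert_erase hcase]
          exact hBbasis
        · -- matroid exchange: extend insert (e (n+1)) (supp (s n)) inside its union with B
          have hAcard : (insert (e (n + 1)) (supp (s n))).card = n + 1 := by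
            rw [Finset.card_insert_of_notMem he_new, hcsn]
          obtain ⟨B', hB'F, hAB', hB'sub, hB'card⟩ :=
            extend_indep hF (M - (n + 1)) (insert (e (n + 1)) (supp (s n))) B hAF
              hBbasis.1 (by omega)
          have hB'cardM : B'.card = M := by rw [hB'card, hBcard]
          have hB'basis : IsBasis F B' := basis_of_card hF hM hB'F hB'cardM
          have heB' : e (n + 1) ∈ B' := hAB' (Finset.mem_insert_self _ _)
          -- B' \ {e (n+1)} ⊆ B
          have hsubB : B'.erase (e (n + 1)) ⊆ B := by
            intro y hy
            rw [Finset.mem_erase] at hy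
            rcases Finset.mem_union.mp (hB'sub hy.2) with hy' | hy'
            · rcases Finset.mem_insert.mp hy' with rfl | hy''
              · exact absurd rfl hy.1
              · exact hsupp_sub hy''
            · exact hy'
          -- pick oj ∈ B \ B'
          have hBnotsub : ¬ B ⊆ B' := by
            intro hsub
            have : B = B' := Finset.eq_of_subset_of_card_le hsub (by omega)
            rw [← this] at heB'
            exact hcase heB'
          obtain ⟨oj, hojB, hojB'⟩ := Finset.not_subset.mp hBnotsub
          have hsub2 : B'.erase (e (n + 1)) ⊆ B.erase oj := by
            intro y hy
            refine Finset.mem_erase.mpr ⟨?_, hsubB hy⟩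
            rintro rfl
            exact hojB' (Finset.mem_of_mem_erase hy)
          have hcards : (B.erase oj).card ≤ (B'.erase (e (n + 1))).card := by
            rw [Finset.card_erase_of_mem hojB, Finset.card_erase_of_mem heB']
            omega
          have heq : B'.erase (e (n + 1)) = B.erase oj :=
            Finset.eq_of_subset_of_card_le hsub2 hcards
          have : insert (e (n + 1)) (B.erase oj) = B' := by
            rw [← heq, Finset.insert_erase heB']
          refine ⟨oj, Finset.mem_sdiff.mpr ⟨hojB, fun hc => ?_⟩, by rw [this]; exact hB'basis⟩
          exact hojB' (hAB' (Finset.mem_insert_of_mem hc))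
      obtain ⟨oj, hojmem, hojbasis⟩ := claim
      rw [Finset.mem_sdiff] at hojmem
      set v : E → Fin (k + 1) :=
        Function.update (Function.update (os n) oj 0) (e (n + 1)) (i (n + 1)) with hv
      have hsupp_v : supp v = insert (e (n + 1)) (B.erase oj) := by
        rw [hv, supp_update_of_ne_zero hi_ne, supp_update_zero]
      have hvle : kLe (s (n + 1)) v := by
        intro a ha
        rcases eq_or_ne a (e (n + 1)) with rfl | hane
        · rw [hv, hs_succ]
          simp
        · have hsa : s (n + 1) a = s n a := by
            rw [hs_succ, Function.update_of_ne hane]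
          rw [hsa] at ha ⊢
          have haoj : a ≠ oj := by
            rintro rfl
            exact hojmem.2 (mem_supp_iff.mpr ha)
          rw [hv, Function.update_of_ne hane, Function.update_of_ne haoj]
          exact hsnle a ha
      refine ⟨Function.update os (n + 1) v, ?_, ?_, ?_, ?_⟩
      · rw [Function.update_of_ne (by omega : (0:ℕ) ≠ n + 1), hos0]
      · intro j hj
        rcases eq_or_lt_of_le hj with rfl | hj'
        · rw [Function.update_self]; exact hvle
        · rw [Function.update_of_ne (by omega : j ≠ n + 1)]
          exact hosle j (by omega)
      · intro j hj
        rcases eq_or_lt_of_le hj with rfl | hj'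
        · rw [Function.update_self, hsupp_v]; exact hojbasis
        · rw [Function.update_of_ne (by omega : j ≠ n + 1)]
          exact hosbasis j (by omega)
      · intro j hj
        rcases eq_or_lt_of_le (by omega : j + 1 ≤ n + 1) with hj1 | hj'
        · have hjn : j = n := by omega
          subst hjn
          refine ⟨oj, ?_, ?_⟩
          · rw [Function.update_of_ne (by omega : j ≠ j + 1), Finset.mem_sdiff]
            exact hojmem
          · rw [Function.update_self, Function.update_of_ne (by omega : j ≠ j + 1)]
        · obtain ⟨oj', hoj'1, hoj'2⟩ := hosstep j (by omega)
          refine ⟨oj', ?_, ?_⟩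
          · rwa [Function.update_of_ne (by omega : j ≠ n + 1)]
          · rw [Function.update_of_ne (by omega : j + 1 ≠ n + 1),
              Function.update_of_ne (by omega : j ≠ n + 1)]
            exact hoj'2
  obtain ⟨os, h0, hle, hbasis, hstep'⟩ := key M le_rfl
  have hsupp_sub : ∀ j ≤ M, supp (s j) ⊆ supp (os j) := by
    intro j hj a ha
    rw [mem_supp_iff] at ha ⊢
    rw [hle j hj a ha]; exact ha
  have hfinal : os M = s M := by
    have hceq : supp (s M) = supp (os M) :=
      Finset.eq_of_subset_of_card_le (hsupp_sub M le_rfl)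
        (by rw [hM _ (hbasis M le_rfl), hcard_s M le_rfl])
    funext a
    by_cases ha : s M a = 0
    · have : a ∉ supp (os M) := by
        rw [← hceq, mem_supp_iff]
        simpa using ha
      rw [mem_supp_iff] at this
      push_neg at this
      rw [this, ha]
    · exact hle M le_rfl a ha
  refine ⟨os, h0, hfinal, ?_, hbasis, hstep'⟩
  intro j hj
  refine ⟨hle j (by omega), ?_⟩
  intro hcontra
  have : (supp (s j)).card = (supp (os j)).card := by rw [hcontra]
  rw [hcard_s j (by omega), hM _ (hbasis j (by omega))] at this
  omega
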